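/- Let P be a finite poset and q a positive integer. If T is an increasing tableau of height q on P, then the set of labels used by ψ^q(T) equals the set of labels used by T, where ψ is K-promotion on Inc^q(P). -/

import Mathlib

open Classical in
/-- One swapping step of `K`-promotion: on each connected component of the Hasse
diagram of `P` restricted to elements labeled `1` or `i` that contains both labels,
swap the labels `1` and `i`. -/
noncomputable def kstep {P : Type*} [PartialOrder P] (i : ℕ) (T : P → ℕ) : P → ℕ :=
  fun p =>
    if T p = 1 ∧ ∃ y, Relation.ReflTransGen
        (fun x z => (x ⋖ z ∨ z ⋖ x) ∧ (T x = 1 ∨ T x = i) ∧ (T z = 1 ∨ T z = i)) p y ∧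
        T y = i then i
    else if T p = i ∧ ∃ y, Relation.ReflTransGen
        (fun x z => (x ⋖ z ∨ z ⋖ x) ∧ (T x = 1 ∨ T x = i) ∧ (T z = 1 ∨ T z = i)) p y ∧
        T y = 1 then 1
    else T p

open Classical in
/-- `K`-promotion of an increasing tableau of height `q`: perform the swapping steps
for `i = 2, …, q` in order, then cyclically decrement all labels (`1 ↦ q`,
`j ↦ j - 1` otherwise). -/
noncomputable def kpromo {P : Type*} [PartialOrder P] (q : ℕ) (T : P → ℕ) : P → ℕ :=
  fun p =>
    if (List.range' 2 (q - 1)).foldl (fun S i => kstep i S) T p = 1 then q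
    else (List.range' 2 (q - 1)).foldl (fun S i => kstep i S) T p - 1

/-- The cyclic decrement map on labels. -/
def ksigma (q : ℕ) : ℕ → ℕ := fun j => if j = 1 then q else j - 1

lemma kstep_range {P : Type*} [PartialOrder P] (i : ℕ) (hi : i ≠ 1) (T : P → ℕ) :
    Set.range (kstep i T) = Set.range T := by
  set r : P → P → Prop :=
    (fun x z => (x ⋖ z ∨ z ⋖ x) ∧ (T x = 1 ∨ T x = i) ∧ (T z = 1 ∨ T z = i)) with hr
  have hsymm : Symmetric (Relation.ReflTransGen r) := by
    suffices hs : ∀ x z, r x z → r z x by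
      have : Std.Symm r := ⟨hs⟩
      exact fun a b h => Std.Symm.symm (r := Relation.ReflTransGen r) a b h
    intro x z ⟨h1, h2, h3⟩
    exact ⟨h1.symm, h3, h2⟩
  ext v
  constructor
  · rintro ⟨p, hp⟩
    unfold kstep at hp
    split_ifs at hp with h1 h2
    · obtain ⟨_, y, _, hy⟩ := h1
      exact ⟨y, hp ▸ hy⟩
    · obtain ⟨_, y, _, hy⟩ := h2
      exact ⟨y, hp ▸ hy⟩
    · exact ⟨p, hp⟩
  · rintro ⟨p, hp⟩
    by_cases h1 : T p = 1 ∧ ∃ y, Relation.ReflTransGen r p y ∧ T y = i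
    · obtain ⟨hp1, y, hconn, hyi⟩ := h1
      refine ⟨y, ?_⟩
      unfold kstep
      rw [if_neg, if_pos ⟨hyi, p, hsymm hconn, hp1⟩]
      · rw [← hp, hp1]
      · rintro ⟨hy1, -⟩
        exact hi (hyi.symm.trans hy1)
    · by_cases h2 : T p = i ∧ ∃ y, Relation.ReflTransGen r p y ∧ T y = 1
      · obtain ⟨hpi, y, hconn, hy1⟩ := h2
        refine ⟨y, ?_⟩
        unfold kstep
        rw [if_pos ⟨hy1, p, hsymm hconn, hpi⟩, ← hp, hpi]
      · refine ⟨p, ?_⟩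
        unfold kstep
        rw [if_neg h1, if_neg h2, hp]

lemma foldl_kstep_range {P : Type*} [PartialOrder P] (l : List ℕ) (hl : ∀ i ∈ l, i ≠ 1)
    (T : P → ℕ) :
    Set.range (l.foldl (fun S i => kstep i S) T) = Set.range T := by
  induction l generalizing T with
  | nil => rfl
  | cons a l ih =>
    rw [List.foldl_cons, ih (fun i hi => hl i (List.mem_cons_of_mem a hi)),
      kstep_range a (hl a List.mem_cons_self)]

lemma kpromo_range {P : Type*} [PartialOrder P] (q : ℕ) (T : P → ℕ) :
    Set.range (kpromo q T) = ksigma q '' Set.range T := by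
  have h : kpromo q T = ksigma q ∘ (List.range' 2 (q - 1)).foldl (fun S i => kstep i S) T := by
    funext p
    simp only [kpromo, ksigma, Function.comp_apply]
  rw [h, Set.range_comp, foldl_kstep_range]
  intro i hi
  rw [List.mem_range'_1] at hi
  omega

lemma ksigma_mem {q j : ℕ} (hq : 1 ≤ q) (h1 : 1 ≤ j) (h2 : j ≤ q) :
    1 ≤ ksigma q j ∧ ksigma q j ≤ q := by
  unfold ksigma; split_ifs <;> omega

lemma kpromo_bounds {P : Type*} [PartialOrder P] (q : ℕ) (hq : 1 ≤ q) (T : P → ℕ)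
    (hT : ∀ p, 1 ≤ T p ∧ T p ≤ q) :
    ∀ p, 1 ≤ kpromo q T p ∧ kpromo q T p ≤ q := by
  intro p
  have hmem : kpromo q T p ∈ Set.range (kpromo q T) := ⟨p, rfl⟩
  rw [kpromo_range] at hmem
  obtain ⟨j, ⟨p', hp'⟩, hj⟩ := hmem
  have := hT p'
  rw [← hj]
  exact ksigma_mem hq (by omega) (by omega)

lemma kpromo_iter_range {P : Type*} [PartialOrder P] (q : ℕ) (hq : 1 ≤ q) (T : P → ℕ)
    (hT : ∀ p, 1 ≤ T p ∧ T p ≤ q) (n : ℕ) :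
    Set.range ((kpromo q)^[n] T) = (ksigma q)^[n] '' Set.range T ∧
      ∀ p, 1 ≤ (kpromo q)^[n] T p ∧ (kpromo q)^[n] T p ≤ q := by
  induction n with
  | zero => simpa using hT
  | succ n ih =>
    obtain ⟨ih1, ih2⟩ := ih
    rw [Function.iterate_succ_apply']
    constructor
    · rw [kpromo_range, ih1, Set.image_image]
      simp only [← Function.iterate_succ_apply']
    · exact kpromo_bounds q hq _ ih2

lemma ksigma_iter_lt {q : ℕ} : ∀ k j : ℕ, k < j → (ksigma q)^[k] j = j - k := by
  intro k
  induction k with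
  | zero => intro j _; simp
  | succ k ih =>
    intro j hj
    rw [Function.iterate_succ_apply]
    have h1 : ksigma q j = j - 1 := by unfold ksigma; rw [if_neg (by omega)]
    rw [h1, ih (j - 1) (by omega)]
    omega

lemma ksigma_iter_q {q j : ℕ} (h1 : 1 ≤ j) (h2 : j ≤ q) : (ksigma q)^[q] j = j := by
  obtain ⟨m, rfl⟩ : ∃ m, j = m + 1 := ⟨j - 1, by omega⟩
  have hj : (ksigma q)^[m + 1] (m + 1) = q := by
    rw [Function.iterate_succ_apply', ksigma_iter_lt m (m + 1) (by omega)]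
    have h : m + 1 - m = 1 := by omega
    rw [h]
    simp [ksigma]
  have key : (ksigma q)^[(q - (m + 1)) + (m + 1)] (m + 1) = m + 1 := by
    rw [Function.iterate_add_apply, hj]
    rcases Nat.eq_or_lt_of_le h2 with h | h
    · rw [← h]
      simp
    · rw [ksigma_iter_lt (q - (m + 1)) q (by omega)]
      omega
  rwa [Nat.sub_add_cancel h2] at key

/-- For an increasing tableau `T` of height `q` on a finite poset `P`, the set of
labels used by `ψ^q(T)` equals the set of labels used by `T`. -/
theorem kpromo_pow_q_labels {P : Type*} [PartialOrder P] [Fintype P]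
    (q : ℕ) (T : P → ℕ)
    (hT1 : ∀ p, 1 ≤ T p ∧ T p ≤ q)
    (hTmono : ∀ x y : P, x < y → T x < T y) :
    Set.range ((kpromo q)^[q] T) = Set.range T := by
  by_cases hP : Nonempty P
  · obtain ⟨p0⟩ := hP
    have hq : 1 ≤ q := le_trans (hT1 p0).1 (hT1 p0).2
    rw [(kpromo_iter_range q hq T hT1 q).1]
    ext v
    constructor
    · rintro ⟨u, ⟨p, hp⟩, hu⟩
      have := hT1 p
      rw [← hu, ksigma_iter_q (by omega) (by omega)]
      exact ⟨p, hp⟩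
    · rintro ⟨p, hp⟩
      exact ⟨v, ⟨p, hp⟩, ksigma_iter_q (by have := hT1 p; omega)
        (by have := hT1 p; omega)⟩
  · rw [not_nonempty_iff] at hP
    rw [Set.range_eq_empty, Set.range_eq_empty]
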